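/- For every unitary O, the linear operator stabilizer entropy upper-bounds the linear operator entanglement: E_lin(O) ≤ M_lin(O). -/

import Mathlib

open Matrix Kronecker

/-- The four single-qubit Pauli matrices `I, X, Y, Z`. -/
noncomputable def pauli : Fin 4 → Matrix (Fin 2) (Fin 2) ℂ :=
  ![1, !![0, 1; 1, 0], !![0, -Complex.I; Complex.I, 0], !![1, 0; 0, -1]]

/-- A Pauli string: the tensor product over the sites `i : ι` of the single-qubit
Pauli matrices `pauli (a i)`. -/
noncomputable def pauliString {ι : Type*} [Fintype ι] (a : ι → Fin 4) :
    Matrix (ι → Fin 2) (ι → Fin 2) ℂ :=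
  Matrix.of fun x y => ∏ i, pauli (a i) (x i) (y i)
/-- The partial swap `T^A₁₂` on the doubled space, swapping the two copies of
subsystem `A` and acting as the identity on the two copies of `B`. -/
noncomputable def swapA (α β : Type*) [DecidableEq α] [DecidableEq β] :
    Matrix ((α × β) × (α × β)) ((α × β) × (α × β)) ℂ :=
  Matrix.of fun p q =>
    if p.1.1 = q.2.1 ∧ p.2.1 = q.1.1 ∧ p.1.2 = q.1.2 ∧ p.2.2 = q.2.2 then 1 else 0

/-- The linear operator entanglement
`E_lin(O) = 1 - d⁻² Tr(T^A₁₂ O^{⊗2} T^A₁₂ (O†)^{⊗2})`, `d = dim(H_A ⊗ H_B)`. -/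
noncomputable def ElinC {α β : Type*} [Fintype α] [Fintype β] [DecidableEq α] [DecidableEq β]
    (O : Matrix (α × β) (α × β) ℂ) : ℂ :=
  1 - (((Fintype.card α : ℂ) * (Fintype.card β : ℂ)) ^ 2)⁻¹ *
    (swapA α β * (O ⊗ₖ O) * swapA α β * (Oᴴ ⊗ₖ Oᴴ)).trace

/-- The (real) linear operator entanglement. -/
noncomputable def ElinR {α β : Type*} [Fintype α] [Fintype β] [DecidableEq α] [DecidableEq β]
    (O : Matrix (α × β) (α × β) ℂ) : ℝ :=
  (ElinC O).re
/-- An `N = N_A + N_B` qubit Pauli string, written as a product operator across the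
bipartition into the first `N_A` and the last `N_B` qubits. -/
noncomputable def pauliP {NA NB : ℕ} (a : Fin NA → Fin 4) (b : Fin NB → Fin 4) :
    Matrix ((Fin NA → Fin 2) × (Fin NB → Fin 2)) ((Fin NA → Fin 2) × (Fin NB → Fin 2)) ℂ :=
  pauliString a ⊗ₖ pauliString b

/-- A Clifford unitary on `N = N_A + N_B` qubits: a unitary mapping every Pauli string
to a Pauli string up to a sign, under conjugation. -/
def IsCliffordP {NA NB : ℕ}
    (C : Matrix ((Fin NA → Fin 2) × (Fin NB → Fin 2)) ((Fin NA → Fin 2) × (Fin NB → Fin 2)) ℂ) :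
    Prop :=
  C ∈ Matrix.unitaryGroup ((Fin NA → Fin 2) × (Fin NB → Fin 2)) ℂ ∧
    ∀ (a : Fin NA → Fin 4) (b : Fin NB → Fin 4),
      ∃ (a' : Fin NA → Fin 4) (b' : Fin NB → Fin 4) (s : ℂ), (s = 1 ∨ s = -1) ∧
        C * pauliP a b * Cᴴ = s • pauliP a' b'

/-- The linear operator stabilizer entropy
`M_lin(O) = 1 − d⁻⁴ Σ_{P'} |Tr(O P')|⁴`, summing over all `4^N` Pauli strings `P'`
(`+1` phase), `d = 2^N`, `N = N_A + N_B`. -/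
noncomputable def MlinP {NA NB : ℕ}
    (O : Matrix ((Fin NA → Fin 2) × (Fin NB → Fin 2))
      ((Fin NA → Fin 2) × (Fin NB → Fin 2)) ℂ) : ℝ :=
  1 - (((2 : ℝ) ^ (NA + NB)) ^ 4)⁻¹ *
    ∑ a : Fin NA → Fin 4, ∑ b : Fin NB → Fin 4, ‖(O * pauliP a b).trace‖ ^ 4

/-! ### Auxiliary lemmas -/

section SwapSide
variable {α β : Type*} [Fintype α] [Fintype β] [DecidableEq α] [DecidableEq β]

/-- The partial-swap permutation on the doubled index set. -/
def swPerm (p : (α × β) × (α × β)) : (α × β) × (α × β) := ((p.2.1, p.1.2), (p.1.1, p.2.2))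

omit [Fintype α] [Fintype β] in
lemma swapA_apply' (p q : (α × β) × (α × β)) :
    swapA α β p q = if q = swPerm p then 1 else 0 := by
  rcases p with ⟨⟨a1, b1⟩, ⟨a2, b2⟩⟩
  rcases q with ⟨⟨c1, d1⟩, ⟨c2, d2⟩⟩
  simp only [swapA, Matrix.of_apply, swPerm, Prod.mk.injEq, Prod.ext_iff]
  apply if_congr _ rfl rfl
  tauto

lemma swapA_mulE (M : Matrix ((α × β) × (α × β)) ((α × β) × (α × β)) ℂ)
    (p r : (α × β) × (α × β)) : (swapA α β * M) p r = M (swPerm p) r := by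
  simp [Matrix.mul_apply, swapA_apply', ite_mul]

lemma SE_eq (O : Matrix (α × β) (α × β) ℂ) :
    (swapA α β * (O ⊗ₖ O) * swapA α β * (Oᴴ ⊗ₖ Oᴴ)).trace =
      ∑ p : (α × β) × (α × β), ∑ r : (α × β) × (α × β),
        O (p.2.1, p.1.2) r.1 * O (p.1.1, p.2.2) r.2 *
          ((starRingEnd ℂ) (O p.1 (r.2.1, r.1.2)) * (starRingEnd ℂ) (O p.2 (r.1.1, r.2.2))) := by
  have key : swapA α β * (O ⊗ₖ O) * swapA α β * (Oᴴ ⊗ₖ Oᴴ) =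
      (swapA α β * (O ⊗ₖ O)) * (swapA α β * (Oᴴ ⊗ₖ Oᴴ)) := mul_assoc _ _ _
  rw [key, Matrix.trace]
  simp only [Matrix.diag_apply]
  apply Finset.sum_congr rfl
  intro p _
  rw [Matrix.mul_apply]
  apply Finset.sum_congr rfl
  intro r _
  rw [swapA_mulE, swapA_mulE]
  simp only [swPerm, Matrix.kroneckerMap_apply, Matrix.conjTranspose_apply, RCLike.star_def]

end SwapSide

lemma pauli_sum (u v u' v' : Fin 2) :
    ∑ p : Fin 4, pauli p u v * (starRingEnd ℂ) (pauli p u' v') =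
      if u = u' ∧ v = v' then 2 else 0 := by
  fin_cases u <;> fin_cases v <;> fin_cases u' <;> fin_cases v' <;>
    simp [pauli, Fin.sum_univ_four, Matrix.one_apply] <;> ring

lemma string_complete {ι : Type*} [Fintype ι] [DecidableEq ι] (x y x' y' : ι → Fin 2) :
    ∑ a : ι → Fin 4, (∏ i, pauli (a i) (x i) (y i)) *
        (starRingEnd ℂ) (∏ i, pauli (a i) (x' i) (y' i)) =
      if x = x' ∧ y = y' then (2 : ℂ) ^ Fintype.card ι else 0 := by
  have h1 : ∀ a : ι → Fin 4,
      (∏ i, pauli (a i) (x i) (y i)) * (starRingEnd ℂ) (∏ i, pauli (a i) (x' i) (y' i)) =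
      ∏ i, pauli (a i) (x i) (y i) * (starRingEnd ℂ) (pauli (a i) (x' i) (y' i)) := by
    intro a
    rw [map_prod, ← Finset.prod_mul_distrib]
  simp only [h1]
  have h2 : ∑ a : ι → Fin 4, ∏ i, pauli (a i) (x i) (y i) *
      (starRingEnd ℂ) (pauli (a i) (x' i) (y' i)) =
      ∏ i, ∑ p : Fin 4, pauli p (x i) (y i) * (starRingEnd ℂ) (pauli p (x' i) (y' i)) := by
    rw [Finset.prod_univ_sum, Fintype.piFinset_univ]
  rw [h2]
  simp only [pauli_sum]
  by_cases h : x = x' ∧ y = y'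
  · simp [h.1, h.2, Finset.prod_const, Finset.card_univ]
  · rw [if_neg h]
    have : ∃ i, ¬(x i = x' i ∧ y i = y' i) := by
      by_contra hc
      push_neg at hc
      exact h ⟨funext fun i => (hc i).1, funext fun i => (hc i).2⟩
    obtain ⟨i, hi⟩ := this
    exact Finset.prod_eq_zero (Finset.mem_univ i) (if_neg hi)

section Mside
variable {NA NB : ℕ}

/-- doubled index (row, column) for the Pauli-trace expansions. -/
abbrev ZT (NA NB : ℕ) :=
  ((Fin NA → Fin 2) × (Fin NB → Fin 2)) × ((Fin NA → Fin 2) × (Fin NB → Fin 2))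

noncomputable def Af (a : Fin NA → Fin 4) (z : ZT NA NB) : ℂ :=
  ∏ i, pauli (a i) (z.2.1 i) (z.1.1 i)

noncomputable def Bf (b : Fin NB → Fin 4) (z : ZT NA NB) : ℂ :=
  ∏ j, pauli (b j) (z.2.2 j) (z.1.2 j)

lemma sum_Af (z w : ZT NA NB) :
    ∑ a : Fin NA → Fin 4, Af a z * (starRingEnd ℂ) (Af a w) =
      if z.2.1 = w.2.1 ∧ z.1.1 = w.1.1 then (2 : ℂ) ^ NA else 0 := by
  unfold Af
  rw [string_complete z.2.1 z.1.1 w.2.1 w.1.1, Fintype.card_fin]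

lemma sum_Bf (z w : ZT NA NB) :
    ∑ b : Fin NB → Fin 4, Bf b z * (starRingEnd ℂ) (Bf b w) =
      if z.2.2 = w.2.2 ∧ z.1.2 = w.1.2 then (2 : ℂ) ^ NB else 0 := by
  unfold Bf
  rw [string_complete z.2.2 z.1.2 w.2.2 w.1.2, Fintype.card_fin]

lemma Tc_eq (O : Matrix ((Fin NA → Fin 2) × (Fin NB → Fin 2))
      ((Fin NA → Fin 2) × (Fin NB → Fin 2)) ℂ) (a : Fin NA → Fin 4) (b : Fin NB → Fin 4) :
    (O * pauliP a b).trace = ∑ z : ZT NA NB, O z.1 z.2 * (Af a z * Bf b z) := by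
  rw [Fintype.sum_prod_type, Matrix.trace]
  simp only [Matrix.diag_apply, Matrix.mul_apply]
  apply Finset.sum_congr rfl
  intro x _
  apply Finset.sum_congr rfl
  intro y _
  simp only [pauliP, pauliString, Matrix.kroneckerMap_apply, Matrix.of_apply, Af, Bf]

/-- the Gram-type function of Pauli traces, summed over the B-factor -/
noncomputable def Mg (O : Matrix ((Fin NA → Fin 2) × (Fin NB → Fin 2))
      ((Fin NA → Fin 2) × (Fin NB → Fin 2)) ℂ) (a a' : Fin NA → Fin 4) : ℂ :=
  ∑ b : Fin NB → Fin 4, (O * pauliP a b).trace * (starRingEnd ℂ) ((O * pauliP a' b).trace)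

lemma Mg_conj (O : Matrix ((Fin NA → Fin 2) × (Fin NB → Fin 2))
      ((Fin NA → Fin 2) × (Fin NB → Fin 2)) ℂ) (a a' : Fin NA → Fin 4) :
    Mg O a' a = (starRingEnd ℂ) (Mg O a a') := by
  simp only [Mg, map_sum, _root_.map_mul, Complex.conj_conj]
  exact Finset.sum_congr rfl fun b _ => mul_comm _ _

/-- the coefficient function after collapsing the B-sum -/
noncomputable def Cc (O : Matrix ((Fin NA → Fin 2) × (Fin NB → Fin 2))
      ((Fin NA → Fin 2) × (Fin NB → Fin 2)) ℂ) (u : ZT NA NB × ZT NA NB) : ℂ :=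
  O u.1.1 u.1.2 * (starRingEnd ℂ) (O u.2.1 u.2.2) *
    (if u.1.2.2 = u.2.2.2 ∧ u.1.1.2 = u.2.1.2 then (2 : ℂ) ^ NB else 0)

lemma Mg_eq (O : Matrix ((Fin NA → Fin 2) × (Fin NB → Fin 2))
      ((Fin NA → Fin 2) × (Fin NB → Fin 2)) ℂ) (a a' : Fin NA → Fin 4) :
    Mg O a a' = ∑ u : ZT NA NB × ZT NA NB,
      Cc O u * (Af a u.1 * (starRingEnd ℂ) (Af a' u.2)) := by
  rw [Fintype.sum_prod_type, Mg]
  simp only [Tc_eq, map_sum, Finset.sum_mul_sum]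
  rw [Finset.sum_comm]
  apply Finset.sum_congr rfl
  intro z _
  rw [Finset.sum_comm]
  apply Finset.sum_congr rfl
  intro w _
  have h : ∀ b : Fin NB → Fin 4,
      O z.1 z.2 * (Af a z * Bf b z) * (starRingEnd ℂ) (O w.1 w.2 * (Af a' w * Bf b w)) =
      (O z.1 z.2 * (starRingEnd ℂ) (O w.1 w.2) * (Af a z * (starRingEnd ℂ) (Af a' w))) *
        (Bf b z * (starRingEnd ℂ) (Bf b w)) := by
    intro b
    simp only [_root_.map_mul]
    ring
  rw [Finset.sum_congr rfl fun b _ => h b, ← Finset.mul_sum, sum_Bf]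
  simp only [Cc]
  ring

lemma sum_rot {K L M : Type*} [Fintype K] [Fintype L] [AddCommMonoid M] (f : K → K → L → L → M) :
    (∑ a : K, ∑ a' : K, ∑ u : L, ∑ v : L, f a a' u v)
      = ∑ u : L, ∑ v : L, ∑ a : K, ∑ a' : K, f a a' u v := by
  calc (∑ a : K, ∑ a' : K, ∑ u : L, ∑ v : L, f a a' u v)
      = ∑ a : K, ∑ u : L, ∑ a' : K, ∑ v : L, f a a' u v :=
        Finset.sum_congr rfl fun a _ => Finset.sum_comm
    _ = ∑ u : L, ∑ a : K, ∑ a' : K, ∑ v : L, f a a' u v := Finset.sum_comm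
    _ = ∑ u : L, ∑ a : K, ∑ v : L, ∑ a' : K, f a a' u v :=
        Finset.sum_congr rfl fun u _ => Finset.sum_congr rfl fun a _ => Finset.sum_comm
    _ = ∑ u : L, ∑ v : L, ∑ a : K, ∑ a' : K, f a a' u v :=
        Finset.sum_congr rfl fun u _ => Finset.sum_comm

lemma if_pin (z z' w : ZT NA NB) :
    (if z.2.2 = w.2.2 ∧ z.1.2 = w.1.2 then (2:ℂ)^NB else 0) *
      (if z'.2.1 = w.2.1 ∧ z'.1.1 = w.1.1 then (2:ℂ)^NA else 0) =
    if w = ((z'.1.1, z.1.2), (z'.2.1, z.2.2)) then (2:ℂ)^NB * 2^NA else 0 := by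
  rcases w with ⟨⟨w11, w12⟩, ⟨w21, w22⟩⟩
  rw [ite_zero_mul_ite_zero]
  apply if_congr _ rfl rfl
  constructor
  · rintro ⟨⟨h1, h2⟩, h3, h4⟩
    subst h1; subst h2; subst h3; subst h4
    rfl
  · intro h
    simp only [Prod.mk.injEq] at h
    obtain ⟨⟨e1, e2⟩, e3, e4⟩ := h
    exact ⟨⟨e4.symm, e2.symm⟩, e3.symm, e1.symm⟩

lemma pin_sum (z z' : ZT NA NB) (F : ZT NA NB → ℂ) :
    (∑ w : ZT NA NB, F w * ((if z.2.2 = w.2.2 ∧ z.1.2 = w.1.2 then (2:ℂ)^NB else 0) *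
      (if z'.2.1 = w.2.1 ∧ z'.1.1 = w.1.1 then (2:ℂ)^NA else 0)))
      = (2:ℂ)^NB * 2^NA * F ((z'.1.1, z.1.2), (z'.2.1, z.2.2)) := by
  have h : ∀ w : ZT NA NB, F w * ((if z.2.2 = w.2.2 ∧ z.1.2 = w.1.2 then (2:ℂ)^NB else 0) *
      (if z'.2.1 = w.2.1 ∧ z'.1.1 = w.1.1 then (2:ℂ)^NA else 0)) =
      if w = ((z'.1.1, z.1.2), (z'.2.1, z.2.2)) then F w * ((2:ℂ)^NB * 2^NA) else 0 := by
    intro w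
    rw [if_pin, mul_ite, mul_zero]
  rw [Finset.sum_congr rfl fun w _ => h w, Finset.sum_ite_eq' Finset.univ]
  simp only [Finset.mem_univ, if_true]
  ring

lemma QS_A (O : Matrix ((Fin NA → Fin 2) × (Fin NB → Fin 2))
      ((Fin NA → Fin 2) × (Fin NB → Fin 2)) ℂ) :
    (∑ a : Fin NA → Fin 4, ∑ a' : Fin NA → Fin 4, Mg O a a' * Mg O a' a)
      = ∑ z : ZT NA NB, ∑ w : ZT NA NB, ∑ z' : ZT NA NB, ∑ w' : ZT NA NB,
          Cc O (z, w) * Cc O (z', w') *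
            ((if z.2.1 = w'.2.1 ∧ z.1.1 = w'.1.1 then (2:ℂ)^NA else 0) *
             (if z'.2.1 = w.2.1 ∧ z'.1.1 = w.1.1 then (2:ℂ)^NA else 0)) := by
  simp only [Mg_eq, Finset.sum_mul_sum]
  rw [sum_rot]
  have main : ∀ u v : ZT NA NB × ZT NA NB,
      (∑ a : Fin NA → Fin 4, ∑ a' : Fin NA → Fin 4,
        (Cc O u * (Af a u.1 * (starRingEnd ℂ) (Af a' u.2))) *
          (Cc O v * (Af a' v.1 * (starRingEnd ℂ) (Af a v.2))))
      = Cc O u * Cc O v *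
          ((if u.1.2.1 = v.2.2.1 ∧ u.1.1.1 = v.2.1.1 then (2:ℂ)^NA else 0) *
           (if v.1.2.1 = u.2.2.1 ∧ v.1.1.1 = u.2.1.1 then (2:ℂ)^NA else 0)) := by
    intro u v
    calc (∑ a : Fin NA → Fin 4, ∑ a' : Fin NA → Fin 4,
        (Cc O u * (Af a u.1 * (starRingEnd ℂ) (Af a' u.2))) *
          (Cc O v * (Af a' v.1 * (starRingEnd ℂ) (Af a v.2))))
        = ∑ a : Fin NA → Fin 4, ∑ a' : Fin NA → Fin 4, (Cc O u * Cc O v) *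
            ((Af a u.1 * (starRingEnd ℂ) (Af a v.2)) *
              (Af a' v.1 * (starRingEnd ℂ) (Af a' u.2))) :=
          Finset.sum_congr rfl fun a _ => Finset.sum_congr rfl fun a' _ => by ring
      _ = (Cc O u * Cc O v) * ∑ a : Fin NA → Fin 4, ∑ a' : Fin NA → Fin 4,
            (Af a u.1 * (starRingEnd ℂ) (Af a v.2)) *
              (Af a' v.1 * (starRingEnd ℂ) (Af a' u.2)) := by
          simp only [← Finset.mul_sum]
      _ = (Cc O u * Cc O v) * ((∑ a : Fin NA → Fin 4, Af a u.1 * (starRingEnd ℂ) (Af a v.2)) *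
            (∑ a' : Fin NA → Fin 4, Af a' v.1 * (starRingEnd ℂ) (Af a' u.2))) := by
          rw [← Finset.sum_mul_sum]
      _ = _ := by rw [sum_Af, sum_Af]
  calc (∑ u : ZT NA NB × ZT NA NB, ∑ v : ZT NA NB × ZT NA NB,
        ∑ a : Fin NA → Fin 4, ∑ a' : Fin NA → Fin 4,
        (Cc O u * (Af a u.1 * (starRingEnd ℂ) (Af a' u.2))) *
          (Cc O v * (Af a' v.1 * (starRingEnd ℂ) (Af a v.2))))
      = ∑ u : ZT NA NB × ZT NA NB, ∑ v : ZT NA NB × ZT NA NB,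
          Cc O u * Cc O v *
            ((if u.1.2.1 = v.2.2.1 ∧ u.1.1.1 = v.2.1.1 then (2:ℂ)^NA else 0) *
             (if v.1.2.1 = u.2.2.1 ∧ v.1.1.1 = u.2.1.1 then (2:ℂ)^NA else 0)) :=
        Finset.sum_congr rfl fun u _ => Finset.sum_congr rfl fun v _ => main u v
    _ = _ := by
        rw [Fintype.sum_prod_type]
        refine Finset.sum_congr rfl fun z _ => Finset.sum_congr rfl fun w _ => ?_
        exact Fintype.sum_prod_type _

lemma QS_eq (O : Matrix ((Fin NA → Fin 2) × (Fin NB → Fin 2))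
      ((Fin NA → Fin 2) × (Fin NB → Fin 2)) ℂ) :
    (∑ a : Fin NA → Fin 4, ∑ a' : Fin NA → Fin 4, Mg O a a' * Mg O a' a)
      = ((2:ℂ)^NB * 2^NA) * ((2:ℂ)^NB * 2^NA) *
        ∑ z : ZT NA NB, ∑ z' : ZT NA NB,
          O z.1 z.2 * O z'.1 z'.2 *
            ((starRingEnd ℂ) (O (z'.1.1, z.1.2) (z'.2.1, z.2.2)) *
             (starRingEnd ℂ) (O (z.1.1, z'.1.2) (z.2.1, z'.2.2))) := by
  rw [QS_A]
  have h1 : ∀ z w z' : ZT NA NB,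
      (∑ w' : ZT NA NB, Cc O (z, w) * Cc O (z', w') *
        ((if z.2.1 = w'.2.1 ∧ z.1.1 = w'.1.1 then (2:ℂ)^NA else 0) *
         (if z'.2.1 = w.2.1 ∧ z'.1.1 = w.1.1 then (2:ℂ)^NA else 0)))
      = (2:ℂ)^NB * 2^NA *
          (Cc O (z, w) * (if z'.2.1 = w.2.1 ∧ z'.1.1 = w.1.1 then (2:ℂ)^NA else 0) *
            (O z'.1 z'.2 * (starRingEnd ℂ) (O (z.1.1, z'.1.2) (z.2.1, z'.2.2)))) := by
    intro z w z'
    have reshape : ∀ w' : ZT NA NB,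
        Cc O (z, w) * Cc O (z', w') *
          ((if z.2.1 = w'.2.1 ∧ z.1.1 = w'.1.1 then (2:ℂ)^NA else 0) *
           (if z'.2.1 = w.2.1 ∧ z'.1.1 = w.1.1 then (2:ℂ)^NA else 0))
        = (Cc O (z, w) * (if z'.2.1 = w.2.1 ∧ z'.1.1 = w.1.1 then (2:ℂ)^NA else 0) *
            (O z'.1 z'.2 * (starRingEnd ℂ) (O w'.1 w'.2))) *
          ((if z'.2.2 = w'.2.2 ∧ z'.1.2 = w'.1.2 then (2:ℂ)^NB else 0) *
           (if z.2.1 = w'.2.1 ∧ z.1.1 = w'.1.1 then (2:ℂ)^NA else 0)) := by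
      intro w'
      simp only [Cc]
      ring
    rw [Finset.sum_congr rfl fun w' _ => reshape w',
      pin_sum z' z (fun w' => Cc O (z, w) *
        (if z'.2.1 = w.2.1 ∧ z'.1.1 = w.1.1 then (2:ℂ)^NA else 0) *
        (O z'.1 z'.2 * (starRingEnd ℂ) (O w'.1 w'.2)))]
  have h2 : ∀ z z' : ZT NA NB,
      (∑ w : ZT NA NB, (2:ℂ)^NB * 2^NA *
        (Cc O (z, w) * (if z'.2.1 = w.2.1 ∧ z'.1.1 = w.1.1 then (2:ℂ)^NA else 0) *
          (O z'.1 z'.2 * (starRingEnd ℂ) (O (z.1.1, z'.1.2) (z.2.1, z'.2.2)))))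
      = (2:ℂ)^NB * 2^NA * ((2:ℂ)^NB * 2^NA) *
          (O z.1 z.2 * O z'.1 z'.2 *
            ((starRingEnd ℂ) (O (z'.1.1, z.1.2) (z'.2.1, z.2.2)) *
             (starRingEnd ℂ) (O (z.1.1, z'.1.2) (z.2.1, z'.2.2)))) := by
    intro z z'
    have reshape : ∀ w : ZT NA NB,
        (2:ℂ)^NB * 2^NA *
          (Cc O (z, w) * (if z'.2.1 = w.2.1 ∧ z'.1.1 = w.1.1 then (2:ℂ)^NA else 0) *
            (O z'.1 z'.2 * (starRingEnd ℂ) (O (z.1.1, z'.1.2) (z.2.1, z'.2.2))))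
        = ((2:ℂ)^NB * 2^NA * (O z.1 z.2 * O z'.1 z'.2 *
              (starRingEnd ℂ) (O (z.1.1, z'.1.2) (z.2.1, z'.2.2)) *
              (starRingEnd ℂ) (O w.1 w.2))) *
          ((if z.2.2 = w.2.2 ∧ z.1.2 = w.1.2 then (2:ℂ)^NB else 0) *
           (if z'.2.1 = w.2.1 ∧ z'.1.1 = w.1.1 then (2:ℂ)^NA else 0)) := by
      intro w
      simp only [Cc]
      ring
    rw [Finset.sum_congr rfl fun w _ => reshape w,
      pin_sum z z' (fun w => (2:ℂ)^NB * 2^NA * (O z.1 z.2 * O z'.1 z'.2 *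
        (starRingEnd ℂ) (O (z.1.1, z'.1.2) (z.2.1, z'.2.2)) *
        (starRingEnd ℂ) (O w.1 w.2)))]
    ring
  calc (∑ z : ZT NA NB, ∑ w : ZT NA NB, ∑ z' : ZT NA NB, ∑ w' : ZT NA NB,
        Cc O (z, w) * Cc O (z', w') *
          ((if z.2.1 = w'.2.1 ∧ z.1.1 = w'.1.1 then (2:ℂ)^NA else 0) *
           (if z'.2.1 = w.2.1 ∧ z'.1.1 = w.1.1 then (2:ℂ)^NA else 0)))
      = ∑ z : ZT NA NB, ∑ w : ZT NA NB, ∑ z' : ZT NA NB, (2:ℂ)^NB * 2^NA *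
          (Cc O (z, w) * (if z'.2.1 = w.2.1 ∧ z'.1.1 = w.1.1 then (2:ℂ)^NA else 0) *
            (O z'.1 z'.2 * (starRingEnd ℂ) (O (z.1.1, z'.1.2) (z.2.1, z'.2.2)))) :=
        Finset.sum_congr rfl fun z _ => Finset.sum_congr rfl fun w _ =>
          Finset.sum_congr rfl fun z' _ => h1 z w z'
    _ = ∑ z : ZT NA NB, ∑ z' : ZT NA NB, ∑ w : ZT NA NB, (2:ℂ)^NB * 2^NA *
          (Cc O (z, w) * (if z'.2.1 = w.2.1 ∧ z'.1.1 = w.1.1 then (2:ℂ)^NA else 0) *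
            (O z'.1 z'.2 * (starRingEnd ℂ) (O (z.1.1, z'.1.2) (z.2.1, z'.2.2)))) :=
        Finset.sum_congr rfl fun z _ => Finset.sum_comm
    _ = ∑ z : ZT NA NB, ∑ z' : ZT NA NB, (2:ℂ)^NB * 2^NA * ((2:ℂ)^NB * 2^NA) *
          (O z.1 z.2 * O z'.1 z'.2 *
            ((starRingEnd ℂ) (O (z'.1.1, z.1.2) (z'.2.1, z.2.2)) *
             (starRingEnd ℂ) (O (z.1.1, z'.1.2) (z.2.1, z'.2.2)))) :=
        Finset.sum_congr rfl fun z _ => Finset.sum_congr rfl fun z' _ => h2 z z'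
    _ = _ := by
        rw [Finset.mul_sum]
        refine Finset.sum_congr rfl fun z _ => ?_
        rw [Finset.mul_sum]

lemma QS_SE (O : Matrix ((Fin NA → Fin 2) × (Fin NB → Fin 2))
      ((Fin NA → Fin 2) × (Fin NB → Fin 2)) ℂ) :
    (∑ z : ZT NA NB, ∑ z' : ZT NA NB,
        O z.1 z.2 * O z'.1 z'.2 *
          ((starRingEnd ℂ) (O (z'.1.1, z.1.2) (z'.2.1, z.2.2)) *
           (starRingEnd ℂ) (O (z.1.1, z'.1.2) (z.2.1, z'.2.2))))
      = ∑ p : ZT NA NB, ∑ r : ZT NA NB,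
          O (p.2.1, p.1.2) r.1 * O (p.1.1, p.2.2) r.2 *
            ((starRingEnd ℂ) (O p.1 (r.2.1, r.1.2)) *
             (starRingEnd ℂ) (O p.2 (r.1.1, r.2.2))) := by
  have l1 : (∑ z : ZT NA NB, ∑ z' : ZT NA NB,
        O z.1 z.2 * O z'.1 z'.2 *
          ((starRingEnd ℂ) (O (z'.1.1, z.1.2) (z'.2.1, z.2.2)) *
           (starRingEnd ℂ) (O (z.1.1, z'.1.2) (z.2.1, z'.2.2))))
      = ∑ q : ZT NA NB × ZT NA NB,
          O q.1.1 q.1.2 * O q.2.1 q.2.2 *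
            ((starRingEnd ℂ) (O (q.2.1.1, q.1.1.2) (q.2.2.1, q.1.2.2)) *
             (starRingEnd ℂ) (O (q.1.1.1, q.2.1.2) (q.1.2.1, q.2.2.2))) :=
    (Fintype.sum_prod_type (f := fun q : ZT NA NB × ZT NA NB =>
      O q.1.1 q.1.2 * O q.2.1 q.2.2 *
        ((starRingEnd ℂ) (O (q.2.1.1, q.1.1.2) (q.2.2.1, q.1.2.2)) *
         (starRingEnd ℂ) (O (q.1.1.1, q.2.1.2) (q.1.2.1, q.2.2.2))))).symm
  have l2 : (∑ p : ZT NA NB, ∑ r : ZT NA NB,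
        O (p.2.1, p.1.2) r.1 * O (p.1.1, p.2.2) r.2 *
          ((starRingEnd ℂ) (O p.1 (r.2.1, r.1.2)) *
           (starRingEnd ℂ) (O p.2 (r.1.1, r.2.2))))
      = ∑ q : ZT NA NB × ZT NA NB,
          O (q.1.2.1, q.1.1.2) q.2.1 * O (q.1.1.1, q.1.2.2) q.2.2 *
            ((starRingEnd ℂ) (O q.1.1 (q.2.2.1, q.2.1.2)) *
             (starRingEnd ℂ) (O q.1.2 (q.2.1.1, q.2.2.2))) :=
    (Fintype.sum_prod_type (f := fun q : ZT NA NB × ZT NA NB =>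
      O (q.1.2.1, q.1.1.2) q.2.1 * O (q.1.1.1, q.1.2.2) q.2.2 *
        ((starRingEnd ℂ) (O q.1.1 (q.2.2.1, q.2.1.2)) *
         (starRingEnd ℂ) (O q.1.2 (q.2.1.1, q.2.2.2))))).symm
  rw [l1, l2]
  refine (Fintype.sum_equiv
    ⟨fun q => (((q.1.2.1, q.1.1.2), q.2.1), ((q.1.1.1, q.1.2.2), q.2.2)),
     fun q => (((q.2.1.1, q.1.1.2), (q.1.1.1, q.2.1.2)), (q.1.2, q.2.2)),
     fun q => by rcases q with ⟨⟨⟨pa1, pb1⟩, ⟨pa2, pb2⟩⟩, ⟨r1, r2⟩⟩; rfl,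
     fun q => by rcases q with ⟨⟨⟨za1, zb1⟩, z2⟩, ⟨⟨za1', zb1'⟩, z2'⟩⟩; rfl⟩
    _ _ fun q => ?_).symm
  rcases q with ⟨⟨⟨pa1, pb1⟩, ⟨pa2, pb2⟩⟩, ⟨r1, r2⟩⟩
  rfl

end Mside

/-- for every unitary `O`, the linear operator stabilizer entropy
upper-bounds the linear operator entanglement: `E_lin(O) ≤ M_lin(O)`. -/
theorem Elin_le_Mlin {NA NB : ℕ}
    (O : Matrix ((Fin NA → Fin 2) × (Fin NB → Fin 2))
      ((Fin NA → Fin 2) × (Fin NB → Fin 2)) ℂ)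
    (hO : O ∈ Matrix.unitaryGroup ((Fin NA → Fin 2) × (Fin NB → Fin 2)) ℂ) :
    ElinR O ≤ MlinP O := by
  classical
  set R : ℝ := ∑ a : Fin NA → Fin 4, ∑ a' : Fin NA → Fin 4, Complex.normSq (Mg O a a') with hR
  have hMM : ∀ a a' : Fin NA → Fin 4,
      Mg O a a' * Mg O a' a = (Complex.normSq (Mg O a a') : ℂ) := by
    intro a a'
    rw [Mg_conj O a a', Complex.mul_conj]
  have hQSreal : (∑ a : Fin NA → Fin 4, ∑ a' : Fin NA → Fin 4, Mg O a a' * Mg O a' a)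
      = (R : ℂ) := by
    simp only [hMM, hR, Complex.ofReal_sum]
  have hTr : (∑ a : Fin NA → Fin 4, ∑ a' : Fin NA → Fin 4, Mg O a a' * Mg O a' a)
      = ((2:ℂ)^NB * 2^NA) * ((2:ℂ)^NB * 2^NA) *
        (swapA (Fin NA → Fin 2) (Fin NB → Fin 2) * (O ⊗ₖ O) *
          swapA (Fin NA → Fin 2) (Fin NB → Fin 2) * (Oᴴ ⊗ₖ Oᴴ)).trace := by
    rw [QS_eq, QS_SE, ← SE_eq]
  have c2 : ((2:ℂ)^NB * 2^NA) ≠ 0 :=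
    mul_ne_zero (pow_ne_zero _ two_ne_zero) (pow_ne_zero _ two_ne_zero)
  have htrace : (swapA (Fin NA → Fin 2) (Fin NB → Fin 2) * (O ⊗ₖ O) *
        swapA (Fin NA → Fin 2) (Fin NB → Fin 2) * (Oᴴ ⊗ₖ Oᴴ)).trace
      = (((2:ℂ)^NB * 2^NA) * ((2:ℂ)^NB * 2^NA))⁻¹ * (R : ℂ) := by
    rw [← hQSreal, hTr]
    field_simp
  have hcardA : (Fintype.card (Fin NA → Fin 2) : ℂ) = 2^NA := by
    simp [Fintype.card_fun]
  have hcardB : (Fintype.card (Fin NB → Fin 2) : ℂ) = 2^NB := by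
    simp [Fintype.card_fun]
  have hElinC : ElinC O = ((1 - (((2:ℝ)^(NA+NB))^4)⁻¹ * R : ℝ) : ℂ) := by
    rw [ElinC, htrace, hcardA, hcardB]
    push_cast
    rw [pow_add]
    field_simp
  have hElinR : ElinR O = 1 - (((2:ℝ)^(NA+NB))^4)⁻¹ * R := by
    rw [ElinR, hElinC, Complex.ofReal_re]
  have hnorm4 : ∀ z : ℂ, ‖z‖^4 = Complex.normSq z ^ 2 := by
    intro z
    rw [← Complex.sq_norm]
    ring
  have hdiag : ∀ a : Fin NA → Fin 4,
      (∑ b : Fin NB → Fin 4, ‖(O * pauliP a b).trace‖^4) ≤ Complex.normSq (Mg O a a) := by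
    intro a
    have hMgaa : Mg O a a
        = ((∑ b : Fin NB → Fin 4, Complex.normSq ((O * pauliP a b).trace) : ℝ) : ℂ) := by
      simp [Mg, Complex.mul_conj, Complex.ofReal_sum]
    rw [hMgaa, Complex.normSq_ofReal, ← sq]
    calc (∑ b : Fin NB → Fin 4, ‖(O * pauliP a b).trace‖^4)
        = ∑ b : Fin NB → Fin 4, Complex.normSq ((O * pauliP a b).trace) ^ 2 :=
          Finset.sum_congr rfl fun b _ => hnorm4 _
      _ ≤ (∑ b : Fin NB → Fin 4, Complex.normSq ((O * pauliP a b).trace)) ^ 2 :=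
          Finset.sum_sq_le_sq_sum_of_nonneg fun b _ => Complex.normSq_nonneg _
  have hS4R : (∑ a : Fin NA → Fin 4, ∑ b : Fin NB → Fin 4, ‖(O * pauliP a b).trace‖^4) ≤ R := by
    calc (∑ a : Fin NA → Fin 4, ∑ b : Fin NB → Fin 4, ‖(O * pauliP a b).trace‖^4)
        ≤ ∑ a : Fin NA → Fin 4, Complex.normSq (Mg O a a) :=
          Finset.sum_le_sum fun a _ => hdiag a
      _ ≤ ∑ a : Fin NA → Fin 4, ∑ a' : Fin NA → Fin 4, Complex.normSq (Mg O a a') :=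
          Finset.sum_le_sum fun a _ =>
            Finset.single_le_sum (fun a' _ => Complex.normSq_nonneg _) (Finset.mem_univ a)
      _ = R := hR.symm
  rw [hElinR, MlinP]
  have hc : (0:ℝ) ≤ (((2:ℝ)^(NA+NB))^4)⁻¹ := by positivity
  exact sub_le_sub_left (mul_le_mul_of_nonneg_left hS4R hc) 1
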